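/- For any n ≥ 2, α ∈ (0,1), and nonzero real r, the polynomial g_n(x) = Σ_{k=0}^{n} (-1)^k · C(n,k) · r^k / ((1-α)^{k-1}(1+(k-1)α)) · x^{n-k} (with the k=0 term being x^n) has at least two nonreal complex roots. -/

import Mathlib

open Polynomial

/-- The coefficient of `x^(n-k)` in `g_n`: `(-1)^k C(n,k) r^k /
((1-α)^(k-1) (1+(k-1)α))` (with `(1-α)^(k-1)` read as a `zpow`). -/
noncomputable def gCoeff (n : ℕ) (α r : ℝ) (k : ℕ) : ℝ :=
  (-1) ^ k * (n.choose k : ℝ) * r ^ k /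
    ((1 - α) ^ ((k : ℤ) - 1) * (1 + ((k : ℝ) - 1) * α))

/-- The polynomial `g_n(x) = Σ_{k=0}^{n} (-1)^k C(n,k) r^k /
((1-α)^(k-1)(1+(k-1)α)) · x^(n-k)` over `ℂ`. -/
noncomputable def gPoly (n : ℕ) (α r : ℝ) : Polynomial ℂ :=
  ∑ k ∈ Finset.range (n + 1), C ((gCoeff n α r k : ℝ) : ℂ) * X ^ (n - k)

lemma my_esymm_one (s : Multiset ℂ) : s.esymm 1 = s.sum := by
  simp [Multiset.esymm, Multiset.powersetCard_one, Multiset.map_map]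

lemma my_esymm_cons (a : ℂ) (s : Multiset ℂ) (k : ℕ) :
    (a ::ₘ s).esymm (k+1) = s.esymm (k+1) + a * s.esymm k := by
  simp only [Multiset.esymm, Multiset.powersetCard_cons, Multiset.map_add, Multiset.sum_add,
    Multiset.map_map, Function.comp_def, Multiset.prod_cons]
  rw [← Multiset.sum_map_mul_left]

/-- Power-sum identity: Σ z² = (Σ z)² - 2 e₂. -/
lemma my_sum_sq (s : Multiset ℂ) :
    (s.map (fun z => z ^ 2)).sum = s.sum ^ 2 - 2 * s.esymm 2 := by
  induction s using Multiset.induction with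
  | empty => simp [Multiset.esymm, Multiset.powersetCard_zero_right]
  | cons a s ih =>
      rw [Multiset.map_cons, Multiset.sum_cons, ih, Multiset.sum_cons,
        my_esymm_cons a s 1, my_esymm_one]
      ring

lemma my_am_gm (a : ℝ) (t : Multiset ℝ) :
    2 * a * t.sum ≤ (Multiset.card t : ℝ) * a ^ 2 + (t.map (fun x => x ^ 2)).sum := by
  induction t using Multiset.induction with
  | empty => simp [sq_nonneg a]
  | cons b t ih =>
      simp only [Multiset.sum_cons, Multiset.map_cons, Multiset.card_cons]
      push_cast
      nlinarith [sq_nonneg (a - b), ih]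

/-- Cauchy–Schwarz for a multiset of reals. -/
lemma my_cs (t : Multiset ℝ) :
    t.sum ^ 2 ≤ (Multiset.card t : ℝ) * (t.map (fun x => x ^ 2)).sum := by
  induction t using Multiset.induction with
  | empty => simp
  | cons a t ih =>
      simp only [Multiset.sum_cons, Multiset.map_cons, Multiset.card_cons]
      push_cast
      nlinarith [my_am_gm a t, ih]

lemma gPoly_coeff (n : ℕ) (α r : ℝ) (j : ℕ) (hj : j ≤ n) :
    (gPoly n α r).coeff (n - j) = ((gCoeff n α r j : ℝ) : ℂ) := by
  rw [gPoly, finset_sum_coeff]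
  rw [Finset.sum_eq_single j]
  · simp [coeff_C_mul, coeff_X_pow]
  · intro k hk hkj
    simp only [Finset.mem_range] at hk
    simp only [coeff_C_mul, coeff_X_pow]
    rw [if_neg (by omega), mul_zero]
  · intro h
    exact absurd (Finset.mem_range.mpr (by omega)) h

/-- For `n ≥ 2`, `0 < α < 1`, `r ≠ 0`, the polynomial `g_n` has at least two
(distinct) nonreal complex roots. -/
theorem stmt17 (n : ℕ) (hn : 2 ≤ n) (α r : ℝ) (hα₁ : 0 < α) (hα₂ : α < 1)
    (hr : r ≠ 0) :
    ∃ z w : ℂ, z ≠ w ∧ z.im ≠ 0 ∧ w.im ≠ 0 ∧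
      (gPoly n α r).IsRoot z ∧ (gPoly n α r).IsRoot w := by
  have hα : (1 : ℝ) - α ≠ 0 := by linarith
  set p := gPoly n α r with hp
  -- coefficient values
  have hg0 : gCoeff n α r 0 = 1 := by
    simp only [gCoeff, pow_zero, Nat.choose_zero_right, Nat.cast_zero, Nat.cast_one,
      zero_sub, zpow_neg, zpow_one]
    rw [show (1 + -1 * α) = 1 - α by ring, inv_mul_cancel₀ hα]
    norm_num
  have hg1 : gCoeff n α r 1 = -(n * r) := by
    simp only [gCoeff, pow_one, Nat.choose_one_right]
    norm_num
  have hg2 : gCoeff n α r 2 = (n.choose 2 : ℝ) * r ^ 2 / ((1 - α) * (1 + α)) := by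
    simp only [gCoeff]
    norm_num
  -- p is monic of degree n
  have hclead : p.coeff n = 1 := by
    have := gPoly_coeff n α r 0 (by omega)
    simpa [hg0] using this
  have hdegle : p.natDegree ≤ n := by
    rw [hp, gPoly]
    refine natDegree_sum_le_of_forall_le _ _ fun k hk => ?_
    refine (natDegree_C_mul_le _ _).trans ?_
    simp [natDegree_X_pow]
  have hmonic : p.Monic := monic_of_natDegree_le_of_coeff_eq_one n hdegle hclead
  have hdeg : p.natDegree = n := le_antisymm hdegle (le_natDegree_of_ne_zero (by rw [hclead]; norm_num))
  have hpne : p ≠ 0 := hmonic.ne_zero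
  have hcard : Multiset.card p.roots = p.natDegree :=
    splits_iff_card_roots.mp (IsAlgClosed.splits p)
  set s := p.roots with hs
  have hcardn : Multiset.card s = n := by rw [hs, hcard, hdeg]
  -- Vieta
  have hsum : s.sum = ((n * r : ℝ) : ℂ) := by
    have h := coeff_eq_esymm_roots_of_card hcard (k := n - 1) (by omega)
    rw [hdeg, show n - (n - 1) = 1 by omega, hmonic.leadingCoeff, my_esymm_one] at h
    have h2 := gPoly_coeff n α r 1 (by omega)
    rw [← hp, h, hg1] at h2
    push_cast at h2 ⊢
    linear_combination -h2
  have hesymm2 : s.esymm 2 = ((gCoeff n α r 2 : ℝ) : ℂ) := by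
    have h := coeff_eq_esymm_roots_of_card hcard (k := n - 2) (by omega)
    rw [hdeg, show n - (n - 2) = 2 by omega, hmonic.leadingCoeff] at h
    have h2 := gPoly_coeff n α r 2 (by omega)
    rw [← hp, h] at h2
    rw [← h2]
    ring
  -- key claim: some root is nonreal
  have key : ∃ z : ℂ, p.IsRoot z ∧ z.im ≠ 0 := by
    by_contra hcon
    push_neg at hcon
    have hreal : ∀ z ∈ s, z = ((z.re : ℝ) : ℂ) := by
      intro z hz
      have hz' := (mem_roots hpne).mp hz
      have h0 : z.im = 0 := hcon z hz'
      exact Complex.ext (by simp) (by simp [h0])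
    set t : Multiset ℝ := s.map Complex.re with ht
    have hst : s = t.map (fun x : ℝ => (x : ℂ)) := by
      rw [ht, Multiset.map_map]
      conv_lhs => rw [show s = Multiset.map id s from (Multiset.map_id s).symm]
      exact Multiset.map_congr rfl fun z hz => hreal z hz
    have htcard : (Multiset.card t : ℝ) = n := by
      rw [ht, Multiset.card_map, hcardn]
    have htsum : t.sum = n * r := by
      have : ((t.sum : ℝ) : ℂ) = s.sum := by
        rw [hst, ← Complex.ofRealHom_eq_coe, map_multiset_sum]
        simp [Complex.ofRealHom_eq_coe]
      rw [hsum] at this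
      exact_mod_cast this
    have htsq : (t.map (fun x => x ^ 2)).sum = (n * r) ^ 2 - 2 * gCoeff n α r 2 := by
      have : (((t.map (fun x => x ^ 2)).sum : ℝ) : ℂ)
          = (s.map (fun z => z ^ 2)).sum := by
        rw [ht, Multiset.map_map, ← Complex.ofRealHom_eq_coe, map_multiset_sum,
          Multiset.map_map]
        refine congrArg _ (Multiset.map_congr rfl fun z hz => ?_)
        conv_rhs => rw [hreal z hz]
        simp [Complex.ofRealHom_eq_coe]
      rw [my_sum_sq, hsum, hesymm2] at this
      exact_mod_cast this
    have hcs := my_cs t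
    rw [htsum, htsq, htcard] at hcs
    rw [hg2] at hcs
    have hch : (n.choose 2 : ℝ) = n * (n - 1) / 2 := by
      rw [Nat.cast_choose_two]
    have hβ : (0:ℝ) < (1 - α) * (1 + α) := by nlinarith
    have hβ1 : (1 - α) * (1 + α) < 1 := by nlinarith
    have hr2 : (0:ℝ) < r ^ 2 := by positivity
    have hn2 : (2:ℝ) ≤ (n:ℝ) := by exact_mod_cast hn
    rw [hch] at hcs
    have hX : (0:ℝ) < (n:ℝ) * ((n:ℝ) - 1) / 2 * r ^ 2 :=
      mul_pos (by nlinarith) hr2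
    have hq : (n:ℝ) * ((n:ℝ) - 1) / 2 * r ^ 2
        < (n:ℝ) * ((n:ℝ) - 1) / 2 * r ^ 2 / ((1 - α) * (1 + α)) := by
      rw [lt_div_iff₀ hβ]
      nlinarith [mul_pos hX (show (0:ℝ) < 1 - (1 - α) * (1 + α) by linarith)]
    nlinarith [mul_lt_mul_of_pos_left hq (show (0:ℝ) < (n:ℝ) by linarith), hcs]
  obtain ⟨z, hz, him⟩ := key
  refine ⟨z, (starRingEnd ℂ) z, ?_, him, by simp [him], hz, ?_⟩
  · intro h
    apply him
    have := congrArg Complex.im h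
    simp at this
    linarith
  · have hconj : p.eval ((starRingEnd ℂ) z) = (starRingEnd ℂ) (p.eval z) := by
      rw [hp, gPoly]
      simp only [eval_finset_sum, eval_mul, eval_C, eval_pow, eval_X, map_sum, map_mul, map_pow,
        Complex.conj_ofReal]
    rw [IsRoot, hconj, hz.eq_zero, map_zero]
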